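/- Let n ≥ 2, c ∈ [n], and let A = T_{1,1} ∪ ... ∪ T_{1,c} ⊆ S_n, and define b_{ij} = |A ∩ T_{ij}|/(n-1)! − c/n. Then ∑_{i,j} b_{ij}³ = c(1 − 1/(n-1)²) − c²·3(n-2)/(n-1)² + c³·2(n-2)/(n(n-1)²). -/

import Mathlib

open Finset Nat

-- transfer lemma
lemma card_filter_mul_left {n : ℕ} (τ : Equiv.Perm (Fin n)) (p : Equiv.Perm (Fin n) → Prop)
    [DecidablePred p] :
    (univ.filter fun σ => p (τ * σ)).card = (univ.filter p).card := by
  apply Finset.card_bij' (fun σ _ => τ * σ) (fun σ _ => τ⁻¹ * σ)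
  · intro σ hσ; simp at hσ ⊢; exact hσ
  · intro σ hσ; simp at hσ ⊢; simpa using hσ
  · intro σ _; group
  · intro σ _; group

lemma card_fix_two {n : ℕ} (hn : 2 ≤ n) (a b : Fin n) (hab : a ≠ b) :
    (univ.filter fun σ : Equiv.Perm (Fin n) => σ a = a ∧ σ b = b).card = (n-2)! := by
  classical
  set f : Fin n → Fin 3 := fun y => if y = a then 0 else if y = b then 1 else 2 with hf
  have key : ∀ σ : Equiv.Perm (Fin n), (σ a = a ∧ σ b = b) ↔ f ∘ σ = f := by
    intro σ
    constructor
    · rintro ⟨h1, h2⟩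
      funext y
      simp only [Function.comp_apply, hf]
      by_cases hya : y = a
      · simp [hya, h1]
      by_cases hyb : y = b
      · simp [hyb, h2, hab.symm]
      have h3 : σ y ≠ a := fun h => hya (σ.injective (h.trans h1.symm))
      have h4 : σ y ≠ b := fun h => hyb (σ.injective (h.trans h2.symm))
      simp [hya, hyb, h3, h4]
    · intro h
      have ha := congrFun h a
      have hb := congrFun h b
      simp only [Function.comp_apply, hf, if_pos rfl] at ha hb
      rw [if_neg hab.symm] at hb
      constructor
      · by_contra h'
        by_cases h'' : σ a = b
        · simp [h'', hab.symm] at ha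
        · simp [h', h''] at ha
      · by_contra h'
        by_cases h'' : σ b = a
        · simp [h''] at hb
        · simp [h', h''] at hb
  have := DomMulAct.stabilizer_card f
  rw [Fintype.card_subtype] at this
  have e1 : (univ.filter fun σ : Equiv.Perm (Fin n) => σ a = a ∧ σ b = b)
      = (univ.filter fun σ : Equiv.Perm (Fin n) => f ∘ σ = f) := by
    apply Finset.filter_congr; intro σ _; simpa using key σ
  rw [e1, this]
  have c0 : Fintype.card {y : Fin n // f y = 0} = 1 := by
    rw [Fintype.card_subtype]
    rw [show (univ.filter fun y : Fin n => f y = 0) = {a} from ?_]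
    · simp
    · ext y
      simp only [mem_filter, mem_univ, true_and, mem_singleton, hf]
      constructor
      · intro h
        by_contra hy
        by_cases hyb : y = b
        · subst hyb; rw [if_neg hy, if_pos rfl] at h; exact absurd h (by decide)
        · rw [if_neg hy, if_neg hyb] at h; exact absurd h (by decide)
      · intro h; simp [h]
  have c1 : Fintype.card {y : Fin n // f y = 1} = 1 := by
    rw [Fintype.card_subtype]
    rw [show (univ.filter fun y : Fin n => f y = 1) = {b} from ?_]
    · simp
    · ext y
      simp only [mem_filter, mem_univ, true_and, mem_singleton, hf]
      constructor
      · intro h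
        by_contra hy
        by_cases hya : y = a
        · subst hya; rw [if_pos rfl] at h; exact absurd h (by decide)
        · rw [if_neg hya, if_neg hy] at h; exact absurd h (by decide)
      · intro h; simp [h, hab.symm]
  have c2 : Fintype.card {y : Fin n // f y = 2} = n - 2 := by
    rw [Fintype.card_subtype]
    rw [show (univ.filter fun y : Fin n => f y = 2) = univ \ {a, b} from ?_]
    · rw [Finset.card_sdiff_of_subset (by simp)]
      rw [Finset.card_pair hab]
      simp
    · ext y
      simp only [mem_filter, mem_univ, true_and, mem_sdiff, mem_insert, mem_singleton, hf]
      constructor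
      · intro h
        rintro (rfl | rfl) <;> simp [hab, hab.symm] at h
      · intro h
        have h1 : y ≠ a := fun hy => h (Or.inl hy)
        have h2 : y ≠ b := fun hy => h (Or.inr hy)
        simp [h1, h2]
  rw [Fin.prod_univ_three, c0, c1, c2]
  simp

lemma card_fix_one {n : ℕ} (a : Fin n) :
    (univ.filter fun σ : Equiv.Perm (Fin n) => σ a = a).card = (n-1)! := by
  classical
  set f : Fin n → Fin 2 := fun y => if y = a then 0 else 1 with hf
  have key : ∀ σ : Equiv.Perm (Fin n), σ a = a ↔ f ∘ σ = f := by
    intro σ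
    constructor
    · intro h1
      funext y
      simp only [Function.comp_apply, hf]
      by_cases hya : y = a
      · simp [hya, h1]
      have h3 : σ y ≠ a := fun h => hya (σ.injective (h.trans h1.symm))
      simp [hya, h3]
    · intro h
      have ha := congrFun h a
      simp only [Function.comp_apply, hf, if_pos rfl] at ha
      by_contra h'
      rw [if_neg h'] at ha
      exact absurd ha (by decide)
  have := DomMulAct.stabilizer_card f
  rw [Fintype.card_subtype] at this
  have e1 : (univ.filter fun σ : Equiv.Perm (Fin n) => σ a = a)
      = (univ.filter fun σ : Equiv.Perm (Fin n) => f ∘ σ = f) := by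
    apply Finset.filter_congr; intro σ _; simpa using key σ
  rw [e1, this]
  have c0 : Fintype.card {y : Fin n // f y = 0} = 1 := by
    rw [Fintype.card_subtype]
    rw [show (univ.filter fun y : Fin n => f y = 0) = {a} from ?_]
    · simp
    · ext y
      simp only [mem_filter, mem_univ, true_and, mem_singleton, hf]
      constructor
      · intro h
        by_contra hy
        rw [if_neg hy] at h; exact absurd h (by decide)
      · intro h; simp [h]
  have c1 : Fintype.card {y : Fin n // f y = 1} = n - 1 := by
    rw [Fintype.card_subtype]
    rw [show (univ.filter fun y : Fin n => f y = 1) = univ \ {a} from ?_]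
    · rw [Finset.card_sdiff_of_subset (by simp)]; simp
    · ext y
      simp only [mem_filter, mem_univ, true_and, mem_sdiff, mem_singleton, hf]
      constructor
      · intro h
        rintro rfl; simp at h
      · intro h; simp [h]
  rw [Fin.prod_univ_two, c0, c1]
  simp

lemma card_one {n : ℕ} (a x : Fin n) :
    (univ.filter fun σ : Equiv.Perm (Fin n) => σ a = x).card = (n-1)! := by
  classical
  set τ : Equiv.Perm (Fin n) := Equiv.swap a x with hτ
  have hτa : τ a = x := Equiv.swap_apply_left a x
  have := card_filter_mul_left τ (fun σ : Equiv.Perm (Fin n) => σ a = x)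
  rw [← this]
  have e : (univ.filter fun σ : Equiv.Perm (Fin n) => (τ * σ) a = x)
      = (univ.filter fun σ : Equiv.Perm (Fin n) => σ a = a) := by
    apply Finset.filter_congr; intro σ _
    simp only [Equiv.Perm.mul_apply]
    rw [← hτa, τ.injective.eq_iff]
  rw [e, card_fix_one]

lemma card_two {n : ℕ} (hn : 2 ≤ n) (a b x y : Fin n) (hab : a ≠ b) (hxy : x ≠ y) :
    (univ.filter fun σ : Equiv.Perm (Fin n) => σ a = x ∧ σ b = y).card = (n-2)! := by
  classical
  set u : Equiv.Perm (Fin n) := Equiv.swap a x with hu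
  have hua : u a = x := Equiv.swap_apply_left a x
  have hub1 : u b ≠ x := by
    rw [← hua, u.injective.ne_iff]; exact fun h => hab (h.symm ▸ rfl)
  set v : Equiv.Perm (Fin n) := Equiv.swap (u b) y with hv
  set τ : Equiv.Perm (Fin n) := v * u with hτ
  have hτa : τ a = x := by
    simp only [hτ, Equiv.Perm.mul_apply, hua]
    exact Equiv.swap_apply_of_ne_of_ne (Ne.symm hub1) hxy
  have hτb : τ b = y := by
    simp only [hτ, Equiv.Perm.mul_apply]
    exact Equiv.swap_apply_left _ _
  have := card_filter_mul_left τ (fun σ : Equiv.Perm (Fin n) => σ a = x ∧ σ b = y)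
  rw [← this]
  have e : (univ.filter fun σ : Equiv.Perm (Fin n) => (τ * σ) a = x ∧ (τ * σ) b = y)
      = (univ.filter fun σ : Equiv.Perm (Fin n) => σ a = a ∧ σ b = b) := by
    apply Finset.filter_congr; intro σ _
    simp only [Equiv.Perm.mul_apply]
    rw [← hτa, ← hτb, τ.injective.eq_iff, τ.injective.eq_iff]
  rw [e, card_fix_two hn a b hab]

lemma count_same {n c : ℕ} (a j : Fin n) :
    (univ.filter fun σ : Equiv.Perm (Fin n) => (σ a : Fin n).val < c ∧ σ a = j).card
      = if (j : ℕ) < c then (n-1)! else 0 := by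
  classical
  by_cases hj : (j : ℕ) < c
  · rw [if_pos hj]
    rw [show (univ.filter fun σ : Equiv.Perm (Fin n) => (σ a : Fin n).val < c ∧ σ a = j)
        = (univ.filter fun σ : Equiv.Perm (Fin n) => σ a = j) from ?_]
    · exact card_one a j
    · apply Finset.filter_congr; intro σ _
      constructor
      · exact fun h => h.2
      · intro h; exact ⟨by rw [h]; exact hj, h⟩
  · rw [if_neg hj, Finset.card_eq_zero, Finset.filter_eq_empty_iff]
    rintro σ - ⟨h1, h2⟩
    rw [h2] at h1
    exact hj h1

lemma count_mix {n c : ℕ} (hn : 2 ≤ n) (hcn : c ≤ n) (a i j : Fin n) (hi : i ≠ a) :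
    (univ.filter fun σ : Equiv.Perm (Fin n) => (σ a : Fin n).val < c ∧ σ i = j).card
      = (c - if (j : ℕ) < c then 1 else 0) * (n-2)! := by
  classical
  set S : Finset (Fin n) := univ.filter fun k : Fin n => (k : ℕ) < c with hS
  have hScard : S.card = c := by
    rw [hS, show (univ.filter fun k : Fin n => (k : ℕ) < c)
        = Finset.attachFin (range c) (fun m hm => lt_of_lt_of_le (mem_range.1 hm) hcn) from ?_]
    · rw [Finset.card_attachFin, Finset.card_range]
    · ext k; simp [Finset.mem_attachFin]
  have hset : (univ.filter fun σ : Equiv.Perm (Fin n) => (σ a : Fin n).val < c ∧ σ i = j)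
      = S.biUnion (fun k => univ.filter fun σ : Equiv.Perm (Fin n) => σ a = k ∧ σ i = j) := by
    ext σ
    simp only [Finset.mem_biUnion, mem_filter, mem_univ, true_and, hS]
    constructor
    · rintro ⟨h1, h2⟩; exact ⟨σ a, by simpa using h1, rfl, h2⟩
    · rintro ⟨k, hk, rfl, h2⟩; exact ⟨by simpa using hk, h2⟩
  rw [hset, Finset.card_biUnion]
  · have hcard : ∀ k ∈ S,
        (univ.filter fun σ : Equiv.Perm (Fin n) => σ a = k ∧ σ i = j).card
          = if k = j then 0 else (n-2)! := by
      intro k _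
      by_cases hkj : k = j
      · subst hkj
        rw [if_pos rfl, Finset.card_eq_zero, Finset.filter_eq_empty_iff]
        rintro σ - ⟨h1, h2⟩
        exact hi (σ.injective (h2.trans h1.symm))
      · rw [if_neg hkj]
        exact card_two hn a i k j (Ne.symm hi) hkj
    rw [Finset.sum_congr rfl hcard]
    by_cases hj : (j : ℕ) < c
    · have hjS : j ∈ S := by simp [hS, hj]
      rw [← Finset.add_sum_erase S _ hjS, if_pos rfl, zero_add]
      rw [Finset.sum_congr rfl (fun k hk => if_neg (Finset.ne_of_mem_erase hk))]
      rw [Finset.sum_const, Finset.card_erase_of_mem hjS, hScard, if_pos hj, smul_eq_mul]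
    · have hjS : j ∉ S := by simp [hS, hj]
      rw [Finset.sum_congr rfl (fun k hk => if_neg (fun h : k = j => hjS (h ▸ hk)))]
      rw [Finset.sum_const, hScard, if_neg hj, smul_eq_mul, Nat.sub_zero]
  · intro k _ l _ hkl
    simp only [Finset.disjoint_left, mem_filter, mem_univ, true_and]
    rintro σ ⟨h1, -⟩ ⟨h2, -⟩
    exact hkl (h1 ▸ h2 ▸ rfl)

lemma card_lt_filter {n c : ℕ} (hcn : c ≤ n) :
    (univ.filter fun k : Fin n => (k : ℕ) < c).card = c := by
  rw [show (univ.filter fun k : Fin n => (k : ℕ) < c)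
      = Finset.attachFin (range c) (fun m hm => lt_of_lt_of_le (mem_range.1 hm) hcn) from ?_]
  · rw [Finset.card_attachFin, Finset.card_range]
  · ext k; simp [Finset.mem_attachFin]

theorem sum_cubes_for_disjoint_union_of_cosets (n c : ℕ) (hn : 2 ≤ n)
    (hc1 : 1 ≤ c) (hcn : c ≤ n) :
    ∑ i : Fin n, ∑ j : Fin n,
      (((Finset.univ.filter fun σ : Equiv.Perm (Fin n) =>
          (σ ⟨0, by omega⟩ : Fin n).val < c ∧ σ i = j).card : ℝ) / ((n - 1)! : ℝ)
        - (c : ℝ) / (n : ℝ)) ^ 3 =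
      (c : ℝ) * (1 - 1 / ((n : ℝ) - 1) ^ 2)
        - (c : ℝ) ^ 2 * (3 * ((n : ℝ) - 2) / ((n : ℝ) - 1) ^ 2)
        + (c : ℝ) ^ 3 * (2 * ((n : ℝ) - 2) / ((n : ℝ) * ((n : ℝ) - 1) ^ 2)) := by
  classical
  have hn0 : 0 < n := by omega
  set z0 : Fin n := ⟨0, by omega⟩ with hz0
  set t1 : ℝ := (((n-1)! : ℝ) / ((n-1)! : ℝ) - (c : ℝ) / (n : ℝ)) ^ 3 with ht1
  set t2 : ℝ := ((0 : ℝ) / ((n-1)! : ℝ) - (c : ℝ) / (n : ℝ)) ^ 3 with ht2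
  set t3 : ℝ := ((((c-1) * (n-2)! : ℕ) : ℝ) / ((n-1)! : ℝ) - (c : ℝ) / (n : ℝ)) ^ 3 with ht3
  set t4 : ℝ := (((c * (n-2)! : ℕ) : ℝ) / ((n-1)! : ℝ) - (c : ℝ) / (n : ℝ)) ^ 3 with ht4
  have hcard_not : (univ.filter fun j : Fin n => ¬ (j : ℕ) < c).card = n - c := by
    rw [Finset.filter_not, Finset.card_sdiff_of_subset (Finset.filter_subset _ _), card_lt_filter hcn]
    simp
  have inner0 : ∑ j : Fin n,
      (((Finset.univ.filter fun σ : Equiv.Perm (Fin n) =>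
          (σ z0 : Fin n).val < c ∧ σ z0 = j).card : ℝ) / ((n - 1)! : ℝ)
        - (c : ℝ) / (n : ℝ)) ^ 3 = c • t1 + (n - c) • t2 := by
    rw [← Finset.sum_filter_add_sum_filter_not univ (fun j : Fin n => (j : ℕ) < c)]
    congr 1
    · rw [Finset.sum_congr rfl (fun j hj => ?_), Finset.sum_const, card_lt_filter hcn]
      rw [count_same z0 j, if_pos (Finset.mem_filter.mp hj).2]
    · rw [Finset.sum_congr rfl (fun j hj => ?_), Finset.sum_const, hcard_not]
      rw [count_same z0 j, if_neg (Finset.mem_filter.mp hj).2, Nat.cast_zero]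
  have inner1 : ∀ i : Fin n, i ≠ z0 → (∑ j : Fin n,
      (((Finset.univ.filter fun σ : Equiv.Perm (Fin n) =>
          (σ z0 : Fin n).val < c ∧ σ i = j).card : ℝ) / ((n - 1)! : ℝ)
        - (c : ℝ) / (n : ℝ)) ^ 3) = c • t3 + (n - c) • t4 := by
    intro i hi
    rw [← Finset.sum_filter_add_sum_filter_not univ (fun j : Fin n => (j : ℕ) < c)]
    congr 1
    · rw [Finset.sum_congr rfl (fun j hj => ?_), Finset.sum_const, card_lt_filter hcn]
      rw [count_mix hn hcn z0 i j hi, if_pos (Finset.mem_filter.mp hj).2]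
    · rw [Finset.sum_congr rfl (fun j hj => ?_), Finset.sum_const, hcard_not]
      rw [count_mix hn hcn z0 i j hi, if_neg (Finset.mem_filter.mp hj).2, Nat.sub_zero]
  rw [← Finset.add_sum_erase univ _ (mem_univ z0)]
  rw [inner0, Finset.sum_congr rfl (fun i hi => inner1 i (Finset.ne_of_mem_erase hi))]
  rw [Finset.sum_const, Finset.card_erase_of_mem (mem_univ z0), Finset.card_univ,
    Fintype.card_fin]
  -- now pure algebra
  have hfact : (n-1)! = (n-1) * (n-2)! := by
    rw [show n - 1 = (n-2) + 1 from by omega, factorial_succ]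
  have hF2 : ((n-2)! : ℝ) ≠ 0 := Nat.cast_ne_zero.mpr (factorial_ne_zero _)
  have hN : (n : ℝ) ≠ 0 := Nat.cast_ne_zero.mpr (by omega)
  have hN1 : (n : ℝ) - 1 ≠ 0 := by
    have : (2 : ℝ) ≤ (n : ℝ) := by exact_mod_cast hn
    nlinarith
  have hC1 : ((c - 1 : ℕ) : ℝ) = (c : ℝ) - 1 := by
    rw [Nat.cast_sub hc1]; norm_num
  have hNC : ((n - c : ℕ) : ℝ) = (n : ℝ) - (c : ℝ) := by rw [Nat.cast_sub hcn]
  have hNm1 : ((n - 1 : ℕ) : ℝ) = (n : ℝ) - 1 := by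
    rw [Nat.cast_sub (by omega)]; norm_num
  rw [ht1, ht2, ht3, ht4, hfact]
  push_cast [hC1, hNC, hNm1]
  simp only [nsmul_eq_mul, hNC, hNm1, hC1]
  push_cast [hC1, hNC, hNm1]
  field_simp
  ring
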